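/- Let X be a real Hilbert space with a second continuous inner product (·,·)_H, and let S''(φ) : X → X* be a bounded symmetric operator. Suppose there exist ψ ∈ X with ‖ψ‖_H = 1 and λ ≤ 0, μ ∈ ℝ with S''(φ)ψ = λ·Iψ + μ·Iφ (I the H-Riesz map), and suppose ⟨S''(φ)p, p⟩ > 0 for all nonzero p with (χ, p)_H = (Jφ, p)_H = 0, where χ is an H-normalized eigenvector with negative eigenvalue. If additionally (φ,ψ)_H = (Jφ,ψ)_H = 0, then ⟨S''(φ)w, w⟩ > 0 for every nonzero w ∈ X with (φ,w)_H = (Jφ,w)_H = (ψ,w)_H = 0. -/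

import Mathlib

open scoped RealInnerProductSpace

theorem stmt_14 {X H : Type*}
    [NormedAddCommGroup X] [InnerProductSpace ℝ X] [CompleteSpace X]
    [NormedAddCommGroup H] [InnerProductSpace ℝ H] [CompleteSpace H]
    (ι : X →L[ℝ] H) (hι : Function.Injective ι)
    (T : X →L[ℝ] X →L[ℝ] ℝ) (hTsymm : ∀ u v : X, T u v = T v u)
    (φ : X) (J : X →L[ℝ] X)
    (ψ : X) (hψ : ‖ι ψ‖ = 1)
    (lam μ : ℝ) (hlam : lam ≤ 0)
    (heig : ∀ v : X, T ψ v = lam * ⟪ι ψ, ι v⟫ + μ * ⟪ι φ, ι v⟫)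
    (χ : X) (hχ : ‖ι χ‖ = 1) (ν : ℝ) (hν : ν < 0)
    (hχeig : ∀ v : X, T χ v = ν * ⟪ι χ, ι v⟫)
    (hpos : ∀ p : X, p ≠ 0 → ⟪ι χ, ι p⟫ = 0 → ⟪ι (J φ), ι p⟫ = 0 → 0 < T p p)
    (hφψ : ⟪ι φ, ι ψ⟫ = 0) (hJφψ : ⟪ι (J φ), ι ψ⟫ = 0) :
    ∀ w : X, w ≠ 0 → ⟪ι φ, ι w⟫ = 0 → ⟪ι (J φ), ι w⟫ = 0 → ⟪ι ψ, ι w⟫ = 0 →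
      0 < T w w := by
  intro w hw hφw hJφw hψw
  by_cases hχw : ⟪ι χ, ι w⟫ = 0
  · exact hpos w hw hχw hJφw
  · by_contra hle
    push_neg at hle
    set a : ℝ := -⟪ι χ, ι w⟫ with ha
    set b : ℝ := ⟪ι χ, ι ψ⟫ with hb
    set p : X := a • ψ + b • w with hp
    have ha0 : a ≠ 0 := by simpa [ha] using hχw
    have hψψ : ⟪ι ψ, ι ψ⟫ = 1 := by
      rw [real_inner_self_eq_norm_sq, hψ]; norm_num
    have hwψ : ⟪ι w, ι ψ⟫ = 0 := by rw [real_inner_comm]; exact hψw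
    have hpψ : ⟪ι p, ι ψ⟫ = a := by
      simp [hp, map_add, map_smul, inner_add_left, inner_smul_left, hψψ, hwψ, hψ]
    have hp0 : p ≠ 0 := by
      intro h
      rw [h] at hpψ
      simp at hpψ
      exact ha0 hpψ.symm
    have hχp : ⟪ι χ, ι p⟫ = 0 := by
      simp only [hp, map_add, map_smul, inner_add_right, inner_smul_right, ha, hb]
      ring
    have hJp : ⟪ι (J φ), ι p⟫ = 0 := by
      simp [hp, map_add, map_smul, inner_add_right, inner_smul_right, hJφψ, hJφw]
    have hψp : ⟪ι ψ, ι p⟫ = a := by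
      simp [hp, map_add, map_smul, inner_add_right, inner_smul_right, hψψ, hψw, hψ]
    have hφp : ⟪ι φ, ι p⟫ = 0 := by
      simp [hp, map_add, map_smul, inner_add_right, inner_smul_right, hφψ, hφw]
    have hTψp : T ψ p = lam * a := by
      rw [heig, hψp, hφp]; ring
    have hTwp : T w p = b * T w w := by
      have h1 : T w ψ = 0 := by
        rw [hTsymm, heig, hψw, hφw]; ring
      simp [hp, map_add, map_smul, h1]
    have hTpp : T p p = a ^ 2 * lam + b ^ 2 * T w w := by
      have : T p p = a * T ψ p + b * T w p := by
        simp only [hp, map_add, map_smul, ContinuousLinearMap.add_apply,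
          ContinuousLinearMap.smul_apply, smul_eq_mul]
        rw [hTsymm w ψ]
      rw [this, hTψp, hTwp]; ring
    have hpos' := hpos p hp0 hχp hJp
    rw [hTpp] at hpos'
    nlinarith [sq_nonneg a, sq_nonneg b]
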